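/- (First-order approximation of the discriminant is the classical Gram law.) Fix N ∈ ℕ, n ∈ ℕ, and a real number g₀ > 0 with θ(g₀) = π·n. Let g : ℝ → ℝ be differentiable at 0 with g(0) = g₀, and define Δ(r) := Z_N(g(r); (r, r, …, r)) (the discriminant of the linear curve, with extremal point g(r)). Then Δ is differentiable at 0 and Δ'(0) = Σ_{k=1}^N cos(θ(g₀) − log(k+1)·g₀)/√(k+1); in particular Δ'(0) equals the derivative at 0 of the map r ↦ Z_N(g₀; (r, …, r)), so the first-order Taylor approximation of Δ(r) at r = 0 is Z_N(g₀; (r,…,r)), the quantity appearing in the classical Gram law. -/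

import Mathlib

/-- The Riemann–Siegel theta function (approximate form):
`θ(t) = (t/2)·log(t/(2π)) − t/2 − π/8`. -/
noncomputable def rsTheta (t : ℝ) : ℝ :=
  t / 2 * Real.log (t / (2 * Real.pi)) - t / 2 - Real.pi / 8

/-- The `N`-th section
`Z_N(t; a) = cos(θ(t)) + Σ_{k=1}^N (aₖ/√(k+1))·cos(θ(t) − log(k+1)·t)`,
with `a : Fin N → ℝ` and the coordinate `k : Fin N` playing the role of the
paper's index `k+1 = k.val + 2`. -/
noncomputable def sectionZ (N : ℕ) (t : ℝ) (a : Fin N → ℝ) : ℝ :=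
  Real.cos (rsTheta t) +
    ∑ k : Fin N, a k / Real.sqrt ((k : ℕ) + 2) *
      Real.cos (rsTheta t - Real.log ((k : ℕ) + 2) * t)

/-- First-order approximation of the discriminant is the classical Gram law:
with `g₀` a Gram point (`θ(g₀) = π·n`, `g₀ > 0`), `g` differentiable at `0` with
`g(0) = g₀`, the discriminant of the linear curve `Δ(r) = Z_N(g(r); (r,…,r))` is
differentiable at `0` with derivative `Σ_{k=1}^N cos(θ(g₀) − log(k+1)·g₀)/√(k+1)`,
which is also the derivative at `0` of `r ↦ Z_N(g₀; (r,…,r))`. -/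
theorem discriminant_first_order_is_gram_law (N : ℕ) (n : ℕ) (g₀ : ℝ)
    (hg₀ : 0 < g₀) (hGram : rsTheta g₀ = Real.pi * n)
    (g : ℝ → ℝ) (hg : DifferentiableAt ℝ g 0) (hg0 : g 0 = g₀) :
    HasDerivAt (fun r : ℝ => sectionZ N (g r) (fun _ => r))
      (∑ k : Fin N,
        Real.cos (rsTheta g₀ - Real.log ((k : ℕ) + 2) * g₀) /
          Real.sqrt ((k : ℕ) + 2)) 0 ∧
    HasDerivAt (fun r : ℝ => sectionZ N g₀ (fun _ => r))
      (∑ k : Fin N,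
        Real.cos (rsTheta g₀ - Real.log ((k : ℕ) + 2) * g₀) /
          Real.sqrt ((k : ℕ) + 2)) 0 := by
  have hg' : HasDerivAt g (deriv g 0) 0 := hg.hasDerivAt
  set G := deriv g 0 with hG
  have hne : g 0 / (2 * Real.pi) ≠ 0 := by
    rw [hg0]
    positivity
  have h1 : DifferentiableAt ℝ (fun t : ℝ => Real.log (t / (2 * Real.pi))) (g 0) :=
    by have h := (Real.differentiableAt_log hne).comp (g 0) (differentiableAt_id.div_const (2 * Real.pi)); exact h
  have hθ : DifferentiableAt ℝ rsTheta (g 0) := by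
    unfold rsTheta
    exact (((differentiableAt_id.div_const 2).mul h1).sub
      (differentiableAt_id.div_const 2)).sub (differentiableAt_const _)
  have hθ' : HasDerivAt rsTheta (deriv rsTheta (g 0)) (g 0) := hθ.hasDerivAt
  set D := deriv rsTheta (g 0) with hD
  have hφ : HasDerivAt (fun r => rsTheta (g r)) (D * G) 0 := hθ'.comp 0 hg'
  have hsin : Real.sin (rsTheta (g 0)) = 0 := by
    rw [hg0, hGram, mul_comm]
    exact Real.sin_nat_mul_pi n
  have hcos : HasDerivAt (fun r => Real.cos (rsTheta (g r))) 0 0 := by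
    have := (Real.hasDerivAt_cos (rsTheta (g 0))).comp 0 hφ
    simpa [hsin, Function.comp_def] using this
  constructor
  · have hterms : ∀ k : Fin N,
        HasDerivAt (fun r : ℝ => r / Real.sqrt ((k : ℕ) + 2) *
            Real.cos (rsTheta (g r) - Real.log ((k : ℕ) + 2) * g r))
          (Real.cos (rsTheta g₀ - Real.log ((k : ℕ) + 2) * g₀) /
            Real.sqrt ((k : ℕ) + 2)) 0 := by
      intro k
      have hψ : HasDerivAt (fun r => rsTheta (g r) - Real.log ((k : ℕ) + 2) * g r)
          (D * G - Real.log ((k : ℕ) + 2) * G) 0 :=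
        hφ.sub (hg'.const_mul _)
      have hck := (Real.hasDerivAt_cos (rsTheta (g 0) - Real.log ((k : ℕ) + 2) * g 0)).comp 0 hψ
      have hid : HasDerivAt (fun r : ℝ => r / Real.sqrt ((k : ℕ) + 2))
          (1 / Real.sqrt ((k : ℕ) + 2)) 0 := (hasDerivAt_id 0).div_const _
      have := hid.mul hck
      simpa [hg0, div_mul_eq_mul_div, one_mul, inv_mul_eq_div, Function.comp_def, Pi.mul_def] using this
    have := hcos.add (HasDerivAt.sum (u := (Finset.univ : Finset (Fin N))) (fun k _ => hterms k))
    simpa [sectionZ, Pi.add_def, Finset.sum_fn] using this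
  · have hterms : ∀ k : Fin N,
        HasDerivAt (fun r : ℝ => r / Real.sqrt ((k : ℕ) + 2) *
            Real.cos (rsTheta g₀ - Real.log ((k : ℕ) + 2) * g₀))
          (Real.cos (rsTheta g₀ - Real.log ((k : ℕ) + 2) * g₀) /
            Real.sqrt ((k : ℕ) + 2)) 0 := by
      intro k
      have hid : HasDerivAt (fun r : ℝ => r / Real.sqrt ((k : ℕ) + 2))
          (1 / Real.sqrt ((k : ℕ) + 2)) 0 := (hasDerivAt_id 0).div_const _
      have := hid.mul_const (Real.cos (rsTheta g₀ - Real.log ((k : ℕ) + 2) * g₀))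
      simpa [div_mul_eq_mul_div, one_mul, inv_mul_eq_div] using this
    have := (hasDerivAt_const (0:ℝ) (Real.cos (rsTheta g₀))).add
      (HasDerivAt.sum (u := (Finset.univ : Finset (Fin N))) (fun k _ => hterms k))
    simpa [sectionZ, Pi.add_def, Finset.sum_fn] using this
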